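/- arXiv:2603.25345 — 2 statements merged into one kernel-verified Lean document; each statement's English description precedes it below -/
import Mathlib

section
/- Let A be a positive semidefinite complex matrix that can be decomposed as A = ∑_{k=1}^{N} B_k, where each B_k is positive semidefinite, and let U be a unitary matrix of the same size. If A·U = A, then B_k·U = B_k for all k ∈ {1, …, N}. -/
open Matrix ComplexOrder BigOperators

/-- If a positive semidefinite matrix `A` decomposes as a sum of
positive semidefinite matrices `B k`, `U` is unitary, and `A·U = A`, then `B k·U = B k`
for every `k`. -/
theorem psd_sum_unitary_invariance {n N : ℕ}
    (A : Matrix (Fin n) (Fin n) ℂ) (B : Fin N → Matrix (Fin n) (Fin n) ℂ)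
    (U : Matrix (Fin n) (Fin n) ℂ)
    (hA : A.PosSemidef) (hB : ∀ k, (B k).PosSemidef)
    (hsum : A = ∑ k, B k)
    (hU : U * Uᴴ = 1 ∧ Uᴴ * U = 1)
    (hAU : A * U = A) :
    ∀ k, B k * U = B k := by
  -- key: if A *ᵥ x = 0 then B k *ᵥ x = 0
  have key : ∀ (x : Fin n → ℂ), A *ᵥ x = 0 → ∀ k, B k *ᵥ x = 0 := by
    intro x hx k
    have hsum0 : ∑ j, star x ⬝ᵥ B j *ᵥ x = 0 := by
      have : star x ⬝ᵥ A *ᵥ x = 0 := by rw [hx, dotProduct_zero]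
      rw [← this, hsum]
      simp only [Matrix.mulVec, Matrix.sum_apply, dotProduct, Finset.mul_sum,
        Finset.sum_mul]
      rw [Finset.sum_comm]
      exact Finset.sum_congr rfl fun y _ => Finset.sum_comm
    have hzero : ∀ j ∈ Finset.univ, star x ⬝ᵥ B j *ᵥ x = 0 := by
      rw [← Finset.sum_eq_zero_iff_of_nonneg]
      · exact hsum0
      · intro j _
        exact (hB j).dotProduct_mulVec_nonneg x
    exact ((hB k).dotProduct_mulVec_zero_iff x).mp (hzero k (Finset.mem_univ k))
  -- A * (U - 1) = 0
  have hA0 : A * (U - 1) = 0 := by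
    rw [Matrix.mul_sub, hAU, Matrix.mul_one, sub_self]
  intro k
  have hB0 : B k * (U - 1) = 0 := by
    ext i j
    have hcol : A *ᵥ (fun i => (U - 1) i j) = 0 := by
      funext i'
      have := congrFun (congrFun hA0 i') j
      simpa [Matrix.mul_apply, Matrix.mulVec, dotProduct] using this
    have := congrFun (key _ hcol k) i
    simpa [Matrix.mul_apply, Matrix.mulVec, dotProduct] using this
  rw [Matrix.mul_sub, Matrix.mul_one, sub_eq_zero] at hB0
  exact hB0
end

section
/- Let n ≥ 2 and let ρ be a density matrix on (ℂ^{d})^{⊗n} that is invariant under conjugation by the unitary implementing any transposition of two tensor factors. Suppose there is a bipartition (K₁, K₂) of {1, …, n} into two nonempty disjoint subsets such that ρ factorises across it, i.e., ρ equals (up to the unitary reordering of tensor factors associated with the bipartition) the tensor product of its marginal on the factors in K₁ with its marginal on the factors in K₂. Then ρ = σ^{⊗n}, where σ is the single-party marginal of ρ (which is the same density matrix on ℂ^{d} for every party). -/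
open Matrix ComplexOrder BigOperators

noncomputable section

/-- Density matrix: positive semidefinite with unit trace. -/
def IsDensity {ι : Type*} [Fintype ι] (ρ : Matrix ι ι ℂ) : Prop :=
  ρ.PosSemidef ∧ ρ.trace = 1

/-- The marginal of an `n`-partite matrix on the parties in `K` (tracing out the
complement of `K`), written as a function of full index tuples: it depends only on the
restrictions of `u`, `v` to `K`. -/
def margOn {n d : ℕ} (K : Finset (Fin n))
    (ρ : Matrix (Fin n → Fin d) (Fin n → Fin d) ℂ) (u v : Fin n → Fin d) : ℂ :=
  ∑ w : {i // i ∉ K} → Fin d,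
    ρ (fun i => if h : i ∈ K then u i else w ⟨i, h⟩)
      (fun i => if h : i ∈ K then v i else w ⟨i, h⟩)

namespace SymmProd

variable {n d : ℕ}

def mrg (K : Finset (Fin n)) (u : Fin n → Fin d) (w : {i // i ∉ K} → Fin d) : Fin n → Fin d :=
  fun i => if h : i ∈ K then u i else w ⟨i, h⟩

def sumOut (K : Finset (Fin n)) (F : (Fin n → Fin d) → (Fin n → Fin d) → ℂ)
    (u v : Fin n → Fin d) : ℂ :=
  ∑ w : {i // i ∉ K} → Fin d, F (mrg K u w) (mrg K v w)

lemma margOn_eq (K : Finset (Fin n)) (ρ : Matrix (Fin n → Fin d) (Fin n → Fin d) ℂ)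
    (u v : Fin n → Fin d) : margOn K ρ u v = sumOut K (fun a b => ρ a b) u v := rfl

def DependsOn (F : (Fin n → Fin d) → (Fin n → Fin d) → ℂ) (T : Finset (Fin n)) : Prop :=
  ∀ u v u' v', (∀ i ∈ T, u i = u' i) → (∀ i ∈ T, v i = v' i) → F u v = F u' v'

lemma mrg_congr {K : Finset (Fin n)} {u u' : Fin n → Fin d}
    (h : ∀ i ∈ K, u i = u' i) (w : {i // i ∉ K} → Fin d) : mrg K u w = mrg K u' w := by
  funext i
  unfold mrg
  split_ifs with hi
  · exact h i hi
  · rfl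

lemma mrg_mem {K : Finset (Fin n)} {u : Fin n → Fin d} {w : {i // i ∉ K} → Fin d}
    {i : Fin n} (h : i ∈ K) : mrg K u w i = u i := dif_pos h

lemma mrg_not_mem {K : Finset (Fin n)} {u : Fin n → Fin d} {w : {i // i ∉ K} → Fin d}
    {i : Fin n} (h : i ∉ K) : mrg K u w i = w ⟨i, h⟩ := dif_neg h

lemma sumOut_congr {K : Finset (Fin n)} {F G : (Fin n → Fin d) → (Fin n → Fin d) → ℂ}
    (h : ∀ a b, F a b = G a b) (u v : Fin n → Fin d) :
    sumOut K F u v = sumOut K G u v :=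
  Finset.sum_congr rfl fun w _ => h _ _

lemma sumOut_univ (F : (Fin n → Fin d) → (Fin n → Fin d) → ℂ) (u v : Fin n → Fin d) :
    sumOut (Finset.univ : Finset (Fin n)) F u v = F u v := by
  have hmrg : ∀ (x : Fin n → Fin d) (w : {i : Fin n // i ∉ (Finset.univ : Finset (Fin n))} → Fin d),
      mrg Finset.univ x w = x := fun x w => funext fun i => dif_pos (Finset.mem_univ i)
  haveI : IsEmpty {i : Fin n // i ∉ (Finset.univ : Finset (Fin n))} :=
    ⟨fun j => j.2 (Finset.mem_univ j.1)⟩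
  rw [sumOut]
  rw [Fintype.sum_unique (fun w => F (mrg Finset.univ u w) (mrg Finset.univ v w))]
  rw [hmrg, hmrg]

/-- If `F` depends only on `Kᶜ`, then `sumOut K F` doesn't depend on `u, v`. -/
lemma sumOut_const {K : Finset (Fin n)} {F : (Fin n → Fin d) → (Fin n → Fin d) → ℂ}
    (hF : DependsOn F Kᶜ) (u v u' v' : Fin n → Fin d) :
    sumOut K F u v = sumOut K F u' v' := by
  refine Finset.sum_congr rfl fun w _ => ?_
  refine hF _ _ _ _ (fun i hi => ?_) (fun i hi => ?_) <;>
  · rw [Finset.mem_compl] at hi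
    rw [mrg_not_mem hi, mrg_not_mem hi]

lemma dependsOn_margOn (K : Finset (Fin n)) (ρ : Matrix (Fin n → Fin d) (Fin n → Fin d) ℂ) :
    DependsOn (fun a b => margOn K ρ a b) K := by
  intro u v u' v' hu hv
  simp only
  rw [margOn_eq, margOn_eq]
  refine Finset.sum_congr rfl fun w _ => ?_
  rw [show mrg K u w = mrg K u' w from mrg_congr hu w,
      show mrg K v w = mrg K v' w from mrg_congr hv w]

/-- Key splitting lemma. -/
lemma sumOut_mul_split {F G : (Fin n → Fin d) → (Fin n → Fin d) → ℂ} {T : Finset (Fin n)}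
    (hF : DependsOn F T) (hG : DependsOn G Tᶜ) (S : Finset (Fin n)) (u v : Fin n → Fin d) :
    sumOut S (fun a b => F a b * G a b) u v
      = sumOut (S ∪ Tᶜ) F u v * sumOut (S ∪ T) G u v := by
  classical
  let p : {i : Fin n // i ∉ S} → Prop := fun j => (j : Fin n) ∈ T
  let e₁ : {j : {i : Fin n // i ∉ S} // p j} ≃ {i : Fin n // i ∉ S ∪ Tᶜ} :=
    { toFun := fun j => ⟨j.1.1, by
        simp only [Finset.mem_union, Finset.mem_compl, not_or, not_not]
        exact ⟨j.1.2, j.2⟩⟩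
      invFun := fun i => ⟨⟨i.1, by
        have := i.2
        simp only [Finset.mem_union, Finset.mem_compl, not_or, not_not] at this
        exact this.1⟩, by
        have := i.2
        simp only [Finset.mem_union, Finset.mem_compl, not_or, not_not] at this
        exact this.2⟩
      left_inv := fun j => rfl
      right_inv := fun i => rfl }
  let e₂ : {j : {i : Fin n // i ∉ S} // ¬ p j} ≃ {i : Fin n // i ∉ S ∪ T} :=
    { toFun := fun j => ⟨j.1.1, by
        simp only [Finset.mem_union, not_or]
        exact ⟨j.1.2, j.2⟩⟩
      invFun := fun i => ⟨⟨i.1, by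
        have := i.2
        simp only [Finset.mem_union, not_or] at this
        exact this.1⟩, by
        have := i.2
        simp only [Finset.mem_union, not_or] at this
        exact this.2⟩
      left_inv := fun j => rfl
      right_inv := fun i => rfl }
  set E := Equiv.piEquivPiSubtypeProd p (fun _ => Fin d) with hE
  rw [sumOut, ← Equiv.sum_comp E.symm
    (fun w => F (mrg S u w) (mrg S v w) * G (mrg S u w) (mrg S v w))]
  rw [Fintype.sum_prod_type]
  have key : ∀ (w₁ : {j // p j} → Fin d) (w₂ : {j // ¬ p j} → Fin d),
      (F (mrg S u (E.symm (w₁, w₂))) (mrg S v (E.symm (w₁, w₂))) *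
        G (mrg S u (E.symm (w₁, w₂))) (mrg S v (E.symm (w₁, w₂))))
      = F (mrg (S ∪ Tᶜ) u (w₁ ∘ e₁.symm)) (mrg (S ∪ Tᶜ) v (w₁ ∘ e₁.symm)) *
        G (mrg (S ∪ T) u (w₂ ∘ e₂.symm)) (mrg (S ∪ T) v (w₂ ∘ e₂.symm)) := by
    intro w₁ w₂
    have hFeq : ∀ x : Fin n → Fin d,
        (∀ i ∈ T, mrg S x (E.symm (w₁, w₂)) i = mrg (S ∪ Tᶜ) x (w₁ ∘ e₁.symm) i) := by
      intro x i hiT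
      by_cases hiS : i ∈ S
      · rw [mrg_mem hiS, mrg_mem (Finset.mem_union_left _ hiS)]
      · have hiU : i ∉ S ∪ Tᶜ := by
          simp only [Finset.mem_union, Finset.mem_compl, not_or, not_not]
          exact ⟨hiS, hiT⟩
        rw [mrg_not_mem hiS, mrg_not_mem hiU]
        rw [hE, Equiv.piEquivPiSubtypeProd_symm_apply]
        have hpj : p ⟨i, hiS⟩ := hiT
        rw [dif_pos hpj]
        rfl
    have hGeq : ∀ x : Fin n → Fin d,
        (∀ i ∈ Tᶜ, mrg S x (E.symm (w₁, w₂)) i = mrg (S ∪ T) x (w₂ ∘ e₂.symm) i) := by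
      intro x i hiT
      rw [Finset.mem_compl] at hiT
      by_cases hiS : i ∈ S
      · rw [mrg_mem hiS, mrg_mem (Finset.mem_union_left _ hiS)]
      · have hiU : i ∉ S ∪ T := by
          simp only [Finset.mem_union, not_or]
          exact ⟨hiS, hiT⟩
        rw [mrg_not_mem hiS, mrg_not_mem hiU]
        rw [hE, Equiv.piEquivPiSubtypeProd_symm_apply]
        have hpj : ¬ p ⟨i, hiS⟩ := hiT
        rw [dif_neg hpj]
        rfl
    rw [hF _ _ _ _ (hFeq u) (hFeq v), hG _ _ _ _ (hGeq u) (hGeq v)]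
  calc (∑ w₁ : {j // p j} → Fin d, ∑ w₂ : {j // ¬ p j} → Fin d,
        F (mrg S u (E.symm (w₁, w₂))) (mrg S v (E.symm (w₁, w₂))) *
          G (mrg S u (E.symm (w₁, w₂))) (mrg S v (E.symm (w₁, w₂))))
      = ∑ w₁ : {j // p j} → Fin d, ∑ w₂ : {j // ¬ p j} → Fin d,
          F (mrg (S ∪ Tᶜ) u (w₁ ∘ e₁.symm)) (mrg (S ∪ Tᶜ) v (w₁ ∘ e₁.symm)) *
            G (mrg (S ∪ T) u (w₂ ∘ e₂.symm)) (mrg (S ∪ T) v (w₂ ∘ e₂.symm)) := by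
        exact Finset.sum_congr rfl fun w₁ _ => Finset.sum_congr rfl fun w₂ _ => key w₁ w₂
    _ = (∑ w₁ : {j // p j} → Fin d,
          F (mrg (S ∪ Tᶜ) u (w₁ ∘ e₁.symm)) (mrg (S ∪ Tᶜ) v (w₁ ∘ e₁.symm))) *
        (∑ w₂ : {j // ¬ p j} → Fin d,
          G (mrg (S ∪ T) u (w₂ ∘ e₂.symm)) (mrg (S ∪ T) v (w₂ ∘ e₂.symm))) := by
        rw [Finset.sum_mul_sum]
    _ = sumOut (S ∪ Tᶜ) F u v * sumOut (S ∪ T) G u v := by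
        congr 1
        · rw [sumOut, ← Equiv.sum_comp (Equiv.arrowCongr e₁ (Equiv.refl (Fin d)))
            (fun w => F (mrg (S ∪ Tᶜ) u w) (mrg (S ∪ Tᶜ) v w))]
          rfl
        · rw [sumOut, ← Equiv.sum_comp (Equiv.arrowCongr e₂ (Equiv.refl (Fin d)))
            (fun w => G (mrg (S ∪ T) u w) (mrg (S ∪ T) v w))]
          rfl


variable {ρ : Matrix (Fin n → Fin d) (Fin n → Fin d) ℂ}

/-- Full permutation invariance from invariance under transpositions. -/
lemma perm_inv (hperm : ∀ i j : Fin n, ∀ u v : Fin n → Fin d,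
      ρ (u ∘ (Equiv.swap i j)) (v ∘ (Equiv.swap i j)) = ρ u v) :
    ∀ (π : Equiv.Perm (Fin n)) (u v : Fin n → Fin d), ρ (u ∘ π) (v ∘ π) = ρ u v := by
  intro π
  refine Equiv.Perm.swap_induction_on (motive := fun π => ∀ u v : Fin n → Fin d,
      ρ (u ∘ π) (v ∘ π) = ρ u v) π (fun u v => rfl) ?_
  intro f x y hxy ih u v
  have h1 : (u ∘ (Equiv.swap x y * f)) = (u ∘ (Equiv.swap x y)) ∘ f := by
    rw [Equiv.Perm.coe_mul]; rfl
  have h2 : (v ∘ (Equiv.swap x y * f)) = (v ∘ (Equiv.swap x y)) ∘ f := by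
    rw [Equiv.Perm.coe_mul]; rfl
  rw [h1, h2, ih, hperm]

lemma mem_image_equiv {π : Equiv.Perm (Fin n)} {K : Finset (Fin n)} {i : Fin n} :
    π i ∈ K.image π ↔ i ∈ K := by
  constructor
  · intro h
    obtain ⟨j, hj, hji⟩ := Finset.mem_image.mp h
    rwa [← π.injective hji]
  · exact fun h => Finset.mem_image_of_mem _ h

lemma margOn_image
    (hinv : ∀ (π : Equiv.Perm (Fin n)) (u v : Fin n → Fin d), ρ (u ∘ π) (v ∘ π) = ρ u v)
    (π : Equiv.Perm (Fin n)) (K : Finset (Fin n)) (u v : Fin n → Fin d) :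
    margOn (K.image π) ρ u v = margOn K ρ (u ∘ π) (v ∘ π) := by
  classical
  let eπ : {i : Fin n // i ∉ K} ≃ {j : Fin n // j ∉ K.image π} :=
    { toFun := fun i => ⟨π i.1, fun h => i.2 (mem_image_equiv.mp h)⟩
      invFun := fun j => ⟨π.symm j.1, fun h => by
        apply j.2
        have : π (π.symm j.1) ∈ K.image π := Finset.mem_image_of_mem _ h
        rwa [Equiv.apply_symm_apply] at this⟩
      left_inv := fun i => Subtype.ext (π.symm_apply_apply i.1)
      right_inv := fun j => Subtype.ext (π.apply_symm_apply j.1) }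
  have step : ∀ w' : {j : Fin n // j ∉ K.image π} → Fin d,
      ρ (mrg (K.image π) u w') (mrg (K.image π) v w')
        = ρ (mrg K (u ∘ π) (w' ∘ eπ)) (mrg K (v ∘ π) (w' ∘ eπ)) := by
    intro w'
    rw [← hinv π (mrg (K.image π) u w') (mrg (K.image π) v w')]
    have harg : ∀ x : Fin n → Fin d,
        (mrg (K.image π) x w') ∘ π = mrg K (x ∘ π) (w' ∘ eπ) := by
      intro x
      funext i
      show mrg (K.image π) x w' (π i) = mrg K (x ∘ π) (w' ∘ eπ) i
      by_cases h : i ∈ K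
      · rw [mrg_mem (mem_image_equiv.mpr h), mrg_mem h]; rfl
      · rw [mrg_not_mem (fun hc => h (mem_image_equiv.mp hc)), mrg_not_mem h]
        rfl
    rw [harg u, harg v]
  rw [margOn_eq, margOn_eq, sumOut, sumOut]
  rw [Finset.sum_congr rfl (fun w' _ => step w')]
  exact Equiv.sum_comp (Equiv.arrowCongr eπ.symm (Equiv.refl (Fin d)))
    (fun w => ρ (mrg K (u ∘ π) w) (mrg K (v ∘ π) w))

lemma exists_perm_image (K T : Finset (Fin n)) (h : K.card = T.card) :
    ∃ π : Equiv.Perm (Fin n), K.image π = T := by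
  classical
  have h1 : Fintype.card {x : Fin n // x ∈ K} = Fintype.card {x : Fin n // x ∈ T} := by
    simp only [Fintype.card_coe, h]
  have h2 : Fintype.card {x : Fin n // x ∉ K} = Fintype.card {x : Fin n // x ∉ T} := by
    rw [Fintype.card_subtype_compl, Fintype.card_subtype_compl, h1]
  let eK := Fintype.equivOfCardEq h1
  let eKc := Fintype.equivOfCardEq h2
  let π : Equiv.Perm (Fin n) :=
    ((Equiv.sumCompl (· ∈ K)).symm.trans (eK.sumCongr eKc)).trans (Equiv.sumCompl (· ∈ T))
  refine ⟨π, ?_⟩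
  have hsub : K.image π ⊆ T := by
    intro a ha
    obtain ⟨b, hb, hba⟩ := Finset.mem_image.mp ha
    have : π b = (eK ⟨b, hb⟩ : Fin n) := by
      show (Equiv.sumCompl (· ∈ T)) ((eK.sumCongr eKc) ((Equiv.sumCompl (· ∈ K)).symm b)) = _
      rw [Equiv.sumCompl_symm_apply_of_pos hb]
      rfl
    rw [← hba, this]
    exact (eK ⟨b, hb⟩).2
  apply Finset.eq_of_subset_of_card_le hsub
  rw [Finset.card_image_of_injective _ π.injective, h]


lemma trace_eq_sum : ρ.trace = ∑ x, ρ x x := rfl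

lemma margOn_normalize (htr : ρ.trace = 1) {T : Finset (Fin n)}
    (hfT : ∀ u v, ρ u v = margOn T ρ u v * margOn Tᶜ ρ u v) :
    (∀ u v, sumOut T (fun a b => margOn Tᶜ ρ a b) u v = 1) ∧
    (∀ u v, sumOut Tᶜ (fun a b => margOn T ρ a b) u v = 1) := by
  have htr' : ∑ x, ρ x x = 1 := by rw [← trace_eq_sum, htr]
  have hA := dependsOn_margOn T ρ
  have hB := dependsOn_margOn Tᶜ ρ
  have hAA : ∀ u v, margOn T ρ u v
      = margOn T ρ u v * sumOut T (fun a b => margOn Tᶜ ρ a b) u v := by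
    intro u v
    conv_lhs => rw [margOn_eq, sumOut_congr hfT u v,
      sumOut_mul_split hA hB T u v, Finset.union_compl, Finset.union_self, sumOut_univ]
  have hBB : ∀ u v, margOn Tᶜ ρ u v
      = sumOut Tᶜ (fun a b => margOn T ρ a b) u v * margOn Tᶜ ρ u v := by
    intro u v
    conv_lhs => rw [margOn_eq, sumOut_congr hfT u v,
      sumOut_mul_split hA hB Tᶜ u v, Finset.union_self,
      show Tᶜ ∪ T = Finset.univ by rw [Finset.union_comm, Finset.union_compl], sumOut_univ]
  constructor
  · intro u v
    by_contra hne
    have hA0 : ∀ u' v', margOn T ρ u' v' = 0 := by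
      intro u' v'
      have h := hAA u' v'
      rw [sumOut_const hB u' v' u v] at h
      by_contra hA0'
      exact hne (mul_left_cancel₀ hA0' (by rw [mul_one]; exact h)).symm
    have hρ0 : ∀ u' v', ρ u' v' = 0 := fun u' v' => by rw [hfT, hA0, zero_mul]
    have h10 : (1 : ℂ) = 0 := by
      rw [← htr']
      exact Finset.sum_eq_zero fun x _ => hρ0 x x
    exact one_ne_zero h10
  · intro u v
    by_contra hne
    have hB0 : ∀ u' v', margOn Tᶜ ρ u' v' = 0 := by
      intro u' v'
      have h := hBB u' v'
      have hconst : sumOut Tᶜ (fun a b => margOn T ρ a b) u' v'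
          = sumOut Tᶜ (fun a b => margOn T ρ a b) u v := by
        refine sumOut_const ?_ u' v' u v
        rw [compl_compl]
        exact hA
      rw [hconst] at h
      by_contra hB0'
      exact hne (mul_right_cancel₀ hB0' (by rw [one_mul]; exact h)).symm
    have hρ0 : ∀ u' v', ρ u' v' = 0 := fun u' v' => by rw [hfT, hB0, mul_zero]
    have h10 : (1 : ℂ) = 0 := by
      rw [← htr']
      exact Finset.sum_eq_zero fun x _ => hρ0 x x
    exact one_ne_zero h10

lemma fact_split (htr : ρ.trace = 1) {T : Finset (Fin n)}
    (hfT : ∀ u v, ρ u v = margOn T ρ u v * margOn Tᶜ ρ u v) (S : Finset (Fin n))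
    (u v : Fin n → Fin d) :
    margOn S ρ u v = margOn (S ∩ T) ρ u v * margOn (S ∩ Tᶜ) ρ u v := by
  obtain ⟨hBone, hAone⟩ := margOn_normalize htr hfT
  have hA := dependsOn_margOn T ρ
  have hB := dependsOn_margOn Tᶜ ρ
  have e1 : margOn S ρ u v
      = sumOut (S ∪ Tᶜ) (fun a b => margOn T ρ a b) u v *
        sumOut (S ∪ T) (fun a b => margOn Tᶜ ρ a b) u v := by
    rw [margOn_eq, sumOut_congr hfT u v, sumOut_mul_split hA hB S u v]
  have e2 : margOn (S ∩ T) ρ u v = sumOut (S ∪ Tᶜ) (fun a b => margOn T ρ a b) u v := by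
    rw [margOn_eq, sumOut_congr hfT u v, sumOut_mul_split hA hB (S ∩ T) u v]
    rw [show S ∩ T ∪ Tᶜ = S ∪ Tᶜ by
      ext a; simp only [Finset.mem_union, Finset.mem_inter, Finset.mem_compl]; tauto]
    rw [show S ∩ T ∪ T = T by
      ext a; simp only [Finset.mem_union, Finset.mem_inter]; tauto]
    rw [hBone, mul_one]
  have e3 : margOn (S ∩ Tᶜ) ρ u v = sumOut (S ∪ T) (fun a b => margOn Tᶜ ρ a b) u v := by
    rw [margOn_eq, sumOut_congr hfT u v, sumOut_mul_split hA hB (S ∩ Tᶜ) u v]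
    rw [show S ∩ Tᶜ ∪ Tᶜ = Tᶜ by
      ext a; simp only [Finset.mem_union, Finset.mem_inter, Finset.mem_compl]; tauto]
    rw [show S ∩ Tᶜ ∪ T = S ∪ T by
      ext a; simp only [Finset.mem_union, Finset.mem_inter, Finset.mem_compl]; tauto]
    rw [hAone, one_mul]
  rw [e1, e2, e3]

end SymmProd

open SymmProd in
/-- A permutation-invariant `n`-partite density matrix that factorises
across some nontrivial bipartition `(K, Kᶜ)` is a tensor power `σ^{⊗n}` of its
single-party marginal `σ` (which is the same for every party). -/
theorem symmetric_product_implies_full_product {n d : ℕ} (hn : 2 ≤ n)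
    (ρ : Matrix (Fin n → Fin d) (Fin n → Fin d) ℂ)
    (hρ : IsDensity ρ)
    (hperm : ∀ i j : Fin n, ∀ u v : Fin n → Fin d,
      ρ (u ∘ (Equiv.swap i j)) (v ∘ (Equiv.swap i j)) = ρ u v)
    (K : Finset (Fin n)) (hK₁ : K.Nonempty) (hK₂ : K ≠ Finset.univ)
    (hfact : ∀ u v, ρ u v = margOn K ρ u v * margOn Kᶜ ρ u v) :
    ∃ σ : Matrix (Fin d) (Fin d) ℂ,
      (∀ i : Fin n, ∀ a b : Fin d, margOn {i} ρ (fun _ => a) (fun _ => b) = σ a b) ∧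
      (∀ u v : Fin n → Fin d, ρ u v = ∏ i, σ (u i) (v i)) := by
  classical
  have hinv := perm_inv hperm
  have htr := hρ.2
  -- the factorisation transports to every cut of the same size
  have hfactT : ∀ T : Finset (Fin n), T.card = K.card →
      ∀ u v, ρ u v = margOn T ρ u v * margOn Tᶜ ρ u v := by
    intro T hT u v
    obtain ⟨π, hπ⟩ := exists_perm_image K T hT.symm
    have hcompl : Kᶜ.image π = Tᶜ := by
      ext a
      simp only [Finset.mem_image, Finset.mem_compl]
      constructor
      · rintro ⟨b, hb, rfl⟩ h
        rw [← hπ] at h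
        exact hb (mem_image_equiv.mp h)
      · intro ha
        refine ⟨π.symm a, fun h => ha ?_, π.apply_symm_apply a⟩
        rw [← hπ]
        have : π (π.symm a) ∈ K.image π := Finset.mem_image_of_mem _ h
        rwa [π.apply_symm_apply] at this
    rw [← hcompl, ← hπ, margOn_image hinv, margOn_image hinv,
      ← hfact (u ∘ π) (v ∘ π), hinv]
  have hn0 : 0 < n := by omega
  set i0 : Fin n := ⟨0, hn0⟩ with hi0
  set σ : Matrix (Fin d) (Fin d) ℂ :=
    Matrix.of (fun a b => margOn {i0} ρ (fun _ => a) (fun _ => b)) with hσ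
  have hσ_apply : ∀ a b, σ a b = margOn {i0} ρ (fun _ => a) (fun _ => b) := fun a b => rfl
  have hsingle : ∀ (i : Fin n) (u v : Fin n → Fin d),
      margOn {i} ρ u v = σ (u i) (v i) := by
    intro i u v
    have him : ({i0} : Finset (Fin n)).image (Equiv.swap i0 i) = {i} := by
      rw [Finset.image_singleton, Equiv.swap_apply_left]
    rw [← him, margOn_image hinv, hσ_apply]
    refine dependsOn_margOn ({i0} : Finset (Fin n)) ρ _ _ _ _ ?_ ?_ <;>
    · intro j hj
      rw [Finset.mem_singleton] at hj
      subst hj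
      show _ = _
      simp [Equiv.swap_apply_left]
  have hKcard : 1 ≤ K.card := Finset.one_le_card.mpr hK₁
  have hKlt : K.card < n := by
    have h := Finset.card_lt_card (Finset.ssubset_univ_iff.mpr hK₂)
    rwa [Finset.card_univ, Fintype.card_fin] at h
  have main : ∀ S : Finset (Fin n), S.Nonempty → ∀ u v : Fin n → Fin d,
      margOn S ρ u v = ∏ i ∈ S, σ (u i) (v i) := by
    intro S
    induction S using Finset.strongInductionOn with
    | _ S ih =>
      intro hS u v
      by_cases hcard : S.card = 1
      · obtain ⟨i, rfl⟩ := Finset.card_eq_one.mp hcard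
        rw [Finset.prod_singleton]
        exact hsingle i u v
      · have h2 : 1 < S.card := lt_of_le_of_ne (Finset.one_le_card.mpr hS) (Ne.symm hcard)
        obtain ⟨i, hi, i', hi', hii'⟩ := Finset.one_lt_card.mp h2
        have hpair : ({i, i'} : Finset (Fin n)).card = 2 := Finset.card_pair hii'
        have hcard_sdiff : (Finset.univ \ ({i, i'} : Finset (Fin n))).card = n - 2 := by
          rw [Finset.card_sdiff_of_subset (Finset.subset_univ _), Finset.card_univ, Fintype.card_fin, hpair]
        obtain ⟨T₀, hT₀sub, hT₀card⟩ := Finset.exists_subset_card_eq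
          (show K.card - 1 ≤ (Finset.univ \ ({i, i'} : Finset (Fin n))).card by
            rw [hcard_sdiff]; omega)
        have hiT₀ : i ∉ T₀ := fun h => by
          have := hT₀sub h
          rw [Finset.mem_sdiff] at this
          exact this.2 (Finset.mem_insert_self _ _)
        have hi'T₀ : i' ∉ T₀ := fun h => by
          have := hT₀sub h
          rw [Finset.mem_sdiff] at this
          exact this.2 (Finset.mem_insert_of_mem (Finset.mem_singleton_self _))
        set T : Finset (Fin n) := insert i T₀ with hT
        have hiT : i ∈ T := Finset.mem_insert_self _ _
        have hi'T : i' ∉ T := by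
          intro h
          rcases Finset.mem_insert.mp h with h' | h'
          · exact hii' h'.symm
          · exact hi'T₀ h'
        have hTcard : T.card = K.card := by
          rw [hT, Finset.card_insert_of_notMem hiT₀, hT₀card]
          omega
        have hsplit := fact_split htr (hfactT T hTcard) S u v
        have hsub1 : S ∩ T ⊂ S :=
          (Finset.ssubset_iff_of_subset (Finset.inter_subset_left)).mpr
            ⟨i', hi', fun h => hi'T (Finset.mem_inter.mp h).2⟩
        have hsub2 : S ∩ Tᶜ ⊂ S :=
          (Finset.ssubset_iff_of_subset (Finset.inter_subset_left)).mpr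
            ⟨i, hi, fun h => (Finset.mem_compl.mp (Finset.mem_inter.mp h).2) hiT⟩
        have hne1 : (S ∩ T).Nonempty := ⟨i, Finset.mem_inter.mpr ⟨hi, hiT⟩⟩
        have hne2 : (S ∩ Tᶜ).Nonempty := ⟨i', Finset.mem_inter.mpr ⟨hi', Finset.mem_compl.mpr hi'T⟩⟩
        rw [hsplit, ih _ hsub1 hne1 u v, ih _ hsub2 hne2 u v]
        rw [← Finset.prod_union (by
          rw [Finset.disjoint_left]
          intro a ha1 ha2
          exact (Finset.mem_compl.mp (Finset.mem_inter.mp ha2).2) (Finset.mem_inter.mp ha1).2)]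
        congr 1
        ext a
        simp only [Finset.mem_union, Finset.mem_inter, Finset.mem_compl]
        tauto
  refine ⟨σ, fun i a b => hsingle i (fun _ => a) (fun _ => b), fun u v => ?_⟩
  have hu : ρ u v = margOn Finset.univ ρ u v := by
    rw [margOn_eq, sumOut_univ]
  rw [hu, main Finset.univ ⟨i0, Finset.mem_univ i0⟩ u v]
end
end
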